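/- Let H be a Hilbert space and A a positive compact operator on H. For p > 0, if one of the limits lim_{s→0⁺} s^p · N(s) or lim_{n→∞} (n+1) μ(n,A)^p exists, then both exist and they are equal, where N(s) = #{n : μ(n,A) > s} is the eigenvalue counting function of A above level s. -/

import Mathlib

open Filter

/-- The `n`-th singular value (approximation number)
`μ(n, T) = inf{‖T − R‖ : rank R ≤ n}` of an operator on a Hilbert space. -/
noncomputable def singVal {H : Type*} [NormedAddCommGroup H]
    [InnerProductSpace ℂ H] (T : H →L[ℂ] H) (n : ℕ) : ℝ :=
  sInf {c : ℝ | ∃ R : H →L[ℂ] H,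
    Module.rank ℂ (LinearMap.range (R : H →ₗ[ℂ] H)) ≤ (n : Cardinal) ∧
      c = ‖T - R‖}

/-- The eigenvalue counting function `N(s) = #{n : μ(n,A) > s}` of a positive
compact operator. -/
noncomputable def countingFn {H : Type*} [NormedAddCommGroup H]
    [InnerProductSpace ℂ H] (A : H →L[ℂ] H) (s : ℝ) : ℕ :=
  Set.ncard {n : ℕ | s < singVal A n}

section basic

variable {H : Type*} [NormedAddCommGroup H] [InnerProductSpace ℂ H]

lemma singVal_set_nonempty (T : H →L[ℂ] H) (n : ℕ) :
    {c : ℝ | ∃ R : H →L[ℂ] H,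
      Module.rank ℂ (LinearMap.range (R : H →ₗ[ℂ] H)) ≤ (n : Cardinal) ∧
        c = ‖T - R‖}.Nonempty :=
  ⟨‖T - 0‖, 0, by simp, rfl⟩

lemma singVal_set_bddBelow (T : H →L[ℂ] H) (n : ℕ) :
    BddBelow {c : ℝ | ∃ R : H →L[ℂ] H,
      Module.rank ℂ (LinearMap.range (R : H →ₗ[ℂ] H)) ≤ (n : Cardinal) ∧
        c = ‖T - R‖} :=
  ⟨0, by rintro c ⟨R, -, rfl⟩; exact norm_nonneg _⟩

lemma singVal_nonneg (T : H →L[ℂ] H) (n : ℕ) : 0 ≤ singVal T n :=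
  Real.sInf_nonneg (by rintro c ⟨R, -, rfl⟩; exact norm_nonneg _)

lemma singVal_antitone (T : H →L[ℂ] H) : Antitone (singVal T) := by
  intro m n h
  refine csInf_le_csInf (singVal_set_bddBelow T n) (singVal_set_nonempty T m) ?_
  rintro c ⟨R, hR, rfl⟩
  exact ⟨R, hR.trans (by exact_mod_cast Nat.cast_le.mpr h), rfl⟩

lemma singVal_le (T R : H →L[ℂ] H) (n : ℕ)
    (h : Module.rank ℂ (LinearMap.range (R : H →ₗ[ℂ] H)) ≤ (n : Cardinal)) :
    singVal T n ≤ ‖T - R‖ :=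
  csInf_le (singVal_set_bddBelow T n) ⟨R, h, rfl⟩

/-- A compact operator on a Hilbert space can be approximated by finite rank
operators. -/
lemma exists_finite_rank_approx [CompleteSpace H] (A : H →L[ℂ] H)
    (hAc : IsCompactOperator A) {ε : ℝ} (hε : 0 < ε) :
    ∃ n : ℕ, ∃ R : H →L[ℂ] H,
      Module.rank ℂ (LinearMap.range (R : H →ₗ[ℂ] H)) ≤ (n : Cardinal) ∧
        ‖A - R‖ ≤ ε := by
  have hAc' : IsCompactOperator (A.toLinearMap : H →ₗ[ℂ] H) := hAc
  have hcpt : IsCompact (closure (A.toLinearMap '' Metric.closedBall 0 1)) :=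
    hAc'.isCompact_closure_image_closedBall 1
  have htb : TotallyBounded (A.toLinearMap '' Metric.closedBall 0 1) :=
    (hcpt.totallyBounded).subset subset_closure
  obtain ⟨t, htf, htcov⟩ := Metric.totallyBounded_iff.mp htb ε hε
  set t' : Finset H := htf.toFinset with ht'
  set K : Submodule ℂ H := Submodule.span ℂ (t' : Set H) with hK
  haveI : FiniteDimensional ℂ K := FiniteDimensional.span_of_finite ℂ t'.finite_toSet
  haveI : CompleteSpace K := FiniteDimensional.complete ℂ K
  set R : H →L[ℂ] H := K.subtypeL ∘L K.orthogonalProjectionOnto ∘L A with hR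
  refine ⟨t'.card, R, ?_, ?_⟩
  · have hle : LinearMap.range (R : H →ₗ[ℂ] H) ≤ K := by
      rintro x ⟨y, rfl⟩
      exact SetLike.coe_mem _
    refine (Submodule.rank_mono hle).trans ?_
    refine (rank_span_le (R := ℂ) (t' : Set H)).trans ?_
    exact le_of_eq Cardinal.mk_coe_finset
  · have key : ∀ x : H, ‖x‖ ≤ 1 → ‖(A - R) x‖ ≤ ε := by
      intro x hx
      have hmem : A x ∈ ⋃ y ∈ t, Metric.ball y ε := htcov ⟨x, by simpa using hx, rfl⟩
      obtain ⟨y, hyt, hy⟩ := Set.mem_iUnion₂.mp hmem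
      have hyK : y ∈ K := Submodule.subset_span (by simpa [ht'] using hyt)
      have hmin : ‖A x - ↑(K.orthogonalProjectionOnto (A x))‖ ≤ ‖A x - y‖ := by
        rw [Submodule.coe_orthogonalProjectionOnto_apply, Submodule.starProjection_minimal]
        exact ciInf_le ⟨0, by rintro _ ⟨z, rfl⟩; exact norm_nonneg _⟩ (⟨y, hyK⟩ : K)
      have heq : ‖(A - R) x‖ = ‖A x - ↑(K.orthogonalProjectionOnto (A x))‖ := by
        simp [hR, ContinuousLinearMap.sub_apply]
      rw [heq]
      exact hmin.trans (le_of_lt (by simpa [dist_eq_norm] using hy))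
    refine ContinuousLinearMap.opNorm_le_bound _ hε.le ?_
    intro x
    rcases eq_or_ne x 0 with rfl | hx0
    · simp
    · have hnx : (0:ℝ) < ‖x‖ := norm_pos_iff.mpr hx0
      set u : H := ((‖x‖ : ℂ))⁻¹ • x with hu
      have hun : ‖u‖ = 1 := by
        rw [hu, norm_smul]
        simp [norm_inv, hnx.ne']
      have hxu : x = ((‖x‖ : ℂ)) • u := by
        rw [hu, smul_smul, mul_inv_cancel₀ (by exact_mod_cast hnx.ne'), one_smul]
      have h1 : ‖(A - R) x‖ = ‖x‖ * ‖(A - R) u‖ := by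
        conv_lhs => rw [hxu]
        rw [map_smul, norm_smul]
        simp
      rw [h1, mul_comm]
      exact mul_le_mul_of_nonneg_right (key u hun.le) hnx.le

/-- The singular values of a compact operator tend to zero. -/
lemma singVal_tendsto_zero [CompleteSpace H] (A : H →L[ℂ] H)
    (hAc : IsCompactOperator A) :
    Tendsto (singVal A) atTop (nhds 0) := by
  rw [Metric.tendsto_atTop]
  intro ε hε
  obtain ⟨N, R, hrank, hnorm⟩ := exists_finite_rank_approx A hAc (by positivity : (0:ℝ) < ε / 2)
  refine ⟨N, fun n hn => ?_⟩
  rw [Real.dist_eq, sub_zero, abs_of_nonneg (singVal_nonneg A n)]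
  have h1 : singVal A n ≤ singVal A N := singVal_antitone A hn
  have h2 : singVal A N ≤ ε / 2 := (singVal_le A R N hrank).trans hnorm
  linarith

end basic

section counting

variable {μ : ℕ → ℝ} {s : ℝ}

lemma ncard_eq_find (hmono : Antitone μ) (hex : ∃ n, μ n ≤ s) :
    Set.ncard {n : ℕ | s < μ n} = Nat.find hex := by
  have hset : {n : ℕ | s < μ n} = Set.Iio (Nat.find hex) := by
    ext k
    simp only [Set.mem_setOf_eq, Set.mem_Iio]
    constructor
    · intro hk
      by_contra hle
      push_neg at hle
      exact absurd ((hmono hle).trans (Nat.find_spec hex)) (not_le.mpr hk)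
    · intro hk
      exact lt_of_not_ge (Nat.find_min hex hk)
  rw [hset, ← Finset.coe_range, Set.ncard_coe_finset, Finset.card_range]

lemma mu_ncard_le (hmono : Antitone μ) (hex : ∃ n, μ n ≤ s) :
    μ (Set.ncard {n : ℕ | s < μ n}) ≤ s := by
  rw [ncard_eq_find hmono hex]; exact Nat.find_spec hex

lemma lt_mu_of_lt_ncard (hmono : Antitone μ) (hex : ∃ n, μ n ≤ s) {k : ℕ}
    (hk : k < Set.ncard {n : ℕ | s < μ n}) : s < μ k := by
  rw [ncard_eq_find hmono hex] at hk
  exact lt_of_not_ge (Nat.find_min hex hk)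

lemma lt_ncard_of_lt_mu (hmono : Antitone μ) (hex : ∃ n, μ n ≤ s) {k : ℕ}
    (hk : s < μ k) : k < Set.ncard {n : ℕ | s < μ n} := by
  rw [ncard_eq_find hmono hex]
  by_contra hle
  push_neg at hle
  exact absurd ((hmono hle).trans (Nat.find_spec hex)) (not_le.mpr hk)

lemma ncard_le_of_mu_le (hmono : Antitone μ) (hex : ∃ n, μ n ≤ s) {k : ℕ}
    (hk : μ k ≤ s) : Set.ncard {n : ℕ | s < μ n} ≤ k := by
  by_contra hgt
  push_neg at hgt
  exact absurd hk (not_le.mpr (lt_mu_of_lt_ncard hmono hex hgt))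

/-- Abstract forward direction: counting asymptotics implies eigenvalue
asymptotics, for an antitone nonnegative null sequence. -/
lemma forward_abstract {p : ℝ} (hp : 0 < p) (hmono : Antitone μ) (hnn : ∀ n, 0 ≤ μ n)
    (h0 : Tendsto μ atTop (nhds 0)) (l : ℝ)
    (h : Tendsto (fun s : ℝ => s ^ p * (Set.ncard {n : ℕ | s < μ n} : ℝ))
      (nhdsWithin 0 (Set.Ioi 0)) (nhds l)) :
    Tendsto (fun n : ℕ => ((n : ℝ) + 1) * μ n ^ p) atTop (nhds l) := by
  have hexs : ∀ s : ℝ, 0 < s → ∃ n, μ n ≤ s := fun s hs =>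
    (h0.eventually_lt_const hs).exists.imp fun n hn => hn.le
  have hl0 : 0 ≤ l := by
    refine ge_of_tendsto h ?_
    filter_upwards [self_mem_nhdsWithin] with s hs
    exact mul_nonneg (Real.rpow_nonneg (le_of_lt hs) p) (Nat.cast_nonneg _)
  rw [Metric.tendsto_atTop]
  intro ε hε
  have hε2 : 0 < ε / 2 := by positivity
  obtain ⟨δ, hδ0, hδ⟩ := Metric.tendsto_nhdsWithin_nhds.mp h (ε / 2) hε2
  obtain ⟨n₀, hn₀⟩ := Metric.tendsto_atTop.mp h0 δ hδ0
  refine ⟨n₀, fun n hn => ?_⟩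
  have hμδ : μ n < δ := by
    have := hn₀ n hn
    rw [Real.dist_eq, sub_zero, abs_of_nonneg (hnn n)] at this
    exact this
  have hub : ((n : ℝ) + 1) * μ n ^ p ≤ l + ε / 2 := by
    rcases eq_or_lt_of_le (hnn n) with h0n | h0n
    · rw [← h0n, Real.zero_rpow hp.ne', mul_zero]
      linarith
    · have key : ∀ s ∈ Set.Ioo (0 : ℝ) (μ n), ((n : ℝ) + 1) * s ^ p ≤ l + ε / 2 := by
        intro s hs
        have hds : dist s (0 : ℝ) < δ := by
          rw [Real.dist_eq, sub_zero, abs_of_pos hs.1]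
          linarith [hs.2]
        have hcl := hδ hs.1 hds
        rw [Real.dist_eq] at hcl
        have hN : n < Set.ncard {k : ℕ | s < μ k} :=
          lt_ncard_of_lt_mu hmono (hexs s hs.1) hs.2
        have hNc : ((n : ℝ) + 1) ≤ (Set.ncard {k : ℕ | s < μ k} : ℝ) := by
          exact_mod_cast hN
        have hsp : 0 ≤ s ^ p := Real.rpow_nonneg hs.1.le p
        nlinarith [abs_sub_le_iff.mp hcl.le]
      have hlim : Tendsto (fun s : ℝ => ((n : ℝ) + 1) * s ^ p)
          (nhdsWithin (μ n) (Set.Iio (μ n))) (nhds (((n : ℝ) + 1) * μ n ^ p)) := by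
        refine Tendsto.const_mul _ ?_
        exact ((Real.continuousAt_rpow_const _ p (Or.inl h0n.ne')).tendsto).mono_left
          nhdsWithin_le_nhds
      refine le_of_tendsto hlim ?_
      filter_upwards [self_mem_nhdsWithin,
        (eventually_gt_nhds h0n).filter_mono nhdsWithin_le_nhds] with s hs1 hs2
      exact key s ⟨hs2, hs1⟩
  have hlb : l - ε / 2 ≤ ((n : ℝ) + 1) * μ n ^ p := by
    have key : ∀ s ∈ Set.Ioo (μ n) δ, l - ε / 2 ≤ ((n : ℝ) + 1) * s ^ p := by
      intro s hs
      have hs0 : 0 < s := lt_of_le_of_lt (hnn n) hs.1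
      have hds : dist s (0 : ℝ) < δ := by
        rw [Real.dist_eq, sub_zero, abs_of_pos hs0]
        exact hs.2
      have hcl := hδ hs0 hds
      rw [Real.dist_eq] at hcl
      have hNle : Set.ncard {k : ℕ | s < μ k} ≤ n :=
        ncard_le_of_mu_le hmono (hexs s hs0) hs.1.le
      have hNc : (Set.ncard {k : ℕ | s < μ k} : ℝ) ≤ (n : ℝ) := by exact_mod_cast hNle
      have hsp : 0 ≤ s ^ p := Real.rpow_nonneg hs0.le p
      nlinarith [abs_sub_le_iff.mp hcl.le]
    have hlim : Tendsto (fun s : ℝ => ((n : ℝ) + 1) * s ^ p)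
        (nhdsWithin (μ n) (Set.Ioi (μ n))) (nhds (((n : ℝ) + 1) * μ n ^ p)) := by
      refine Tendsto.const_mul _ ?_
      exact ((Real.continuousAt_rpow_const _ p (Or.inr hp.le)).tendsto).mono_left
        nhdsWithin_le_nhds
    refine ge_of_tendsto hlim ?_
    filter_upwards [self_mem_nhdsWithin,
      (eventually_lt_nhds hμδ).filter_mono nhdsWithin_le_nhds] with s hs1 hs2
    exact key s ⟨hs1, hs2⟩
  rw [Real.dist_eq, abs_sub_lt_iff]
  constructor <;> linarith

/-- Abstract backward direction: eigenvalue asymptotics implies counting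
asymptotics, for an antitone nonnegative null sequence. -/
lemma backward_abstract {p : ℝ} (hp : 0 < p) (hmono : Antitone μ) (hnn : ∀ n, 0 ≤ μ n)
    (h0 : Tendsto μ atTop (nhds 0)) (l : ℝ)
    (h : Tendsto (fun n : ℕ => ((n : ℝ) + 1) * μ n ^ p) atTop (nhds l)) :
    Tendsto (fun s : ℝ => s ^ p * (Set.ncard {n : ℕ | s < μ n} : ℝ))
      (nhdsWithin 0 (Set.Ioi 0)) (nhds l) := by
  have hexs : ∀ s : ℝ, 0 < s → ∃ n, μ n ≤ s := fun s hs =>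
    (h0.eventually_lt_const hs).exists.imp fun n hn => hn.le
  by_cases hzero : ∃ k, μ k = 0
  · obtain ⟨k, hk⟩ := hzero
    have hmueq : ∀ n, k ≤ n → μ n = 0 := fun n hn =>
      le_antisymm (hk ▸ hmono hn) (hnn n)
    have hl : l = 0 := by
      refine tendsto_nhds_unique h ?_
      refine Tendsto.congr' ?_ tendsto_const_nhds
      filter_upwards [eventually_ge_atTop k] with n hn
      rw [hmueq n hn, Real.zero_rpow hp.ne', mul_zero]
    subst hl
    have hub : ∀ s : ℝ, 0 < s →
        s ^ p * (Set.ncard {n : ℕ | s < μ n} : ℝ) ≤ (k : ℝ) * s ^ p := by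
      intro s hs
      have hNle : Set.ncard {n : ℕ | s < μ n} ≤ k :=
        ncard_le_of_mu_le hmono (hexs s hs) (by rw [hk]; exact hs.le)
      have : (Set.ncard {n : ℕ | s < μ n} : ℝ) ≤ (k : ℝ) := by exact_mod_cast hNle
      have hsp : 0 ≤ s ^ p := Real.rpow_nonneg hs.le p
      nlinarith
    have hg : Tendsto (fun s : ℝ => (k : ℝ) * s ^ p) (nhdsWithin 0 (Set.Ioi 0)) (nhds 0) := by
      have : Tendsto (fun s : ℝ => s ^ p) (nhds 0) (nhds ((0:ℝ) ^ p)) :=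
        (Real.continuousAt_rpow_const 0 p (Or.inr hp.le)).tendsto
      rw [Real.zero_rpow hp.ne'] at this
      simpa using (this.const_mul (k : ℝ)).mono_left nhdsWithin_le_nhds
    refine squeeze_zero' ?_ ?_ hg
    · filter_upwards [self_mem_nhdsWithin] with s hs
      exact mul_nonneg (Real.rpow_nonneg (le_of_lt hs) p) (Nat.cast_nonneg _)
    · filter_upwards [self_mem_nhdsWithin] with s hs
      exact hub s hs
  · push_neg at hzero
    have hpos : ∀ n, 0 < μ n := fun n => (hnn n).lt_of_ne (Ne.symm (hzero n))
    have hl0 : 0 ≤ l := by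
      refine ge_of_tendsto h ?_
      filter_upwards with n
      exact mul_nonneg (by positivity) (Real.rpow_nonneg (hnn n) p)
    rw [Metric.tendsto_nhdsWithin_nhds]
    intro ε hε
    have hε3 : 0 < ε / 3 := by positivity
    obtain ⟨n₀, hn₀⟩ := Metric.tendsto_atTop.mp h (ε / 3) hε3
    set m : ℕ := max n₀ ⌈(l + ε / 3) / (ε / 3)⌉₊ with hm
    have hmn₀ : n₀ ≤ m := le_max_left _ _
    have hmc : l + ε / 3 ≤ ((m : ℝ) + 2) * (ε / 3) := by
      have h1 : (l + ε / 3) / (ε / 3) ≤ (⌈(l + ε / 3) / (ε / 3)⌉₊ : ℝ) := Nat.le_ceil _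
      have h2 : (⌈(l + ε / 3) / (ε / 3)⌉₊ : ℝ) ≤ (m : ℝ) := by
        exact_mod_cast Nat.cast_le.mpr (le_max_right _ _)
      have h3 : (l + ε / 3) / (ε / 3) ≤ (m : ℝ) + 2 := by linarith
      calc l + ε / 3 = (l + ε / 3) / (ε / 3) * (ε / 3) := by field_simp
        _ ≤ ((m : ℝ) + 2) * (ε / 3) := by
            exact mul_le_mul_of_nonneg_right h3 hε3.le
    refine ⟨μ m, hpos m, ?_⟩
    intro s hs hds
    rw [Real.dist_eq, sub_zero, abs_of_pos hs] at hds
    have hs0 : 0 < s := hs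
    have hex := hexs s hs0
    set k : ℕ := Set.ncard {n : ℕ | s < μ n} with hkdef
    have hmk : m < k := lt_ncard_of_lt_mu hmono hex hds
    have hk0 : 0 < k := lt_of_le_of_lt (Nat.zero_le m) hmk
    obtain ⟨j, hj⟩ : ∃ j, k = j + 1 := ⟨k - 1, (Nat.succ_pred_eq_of_pos hk0).symm⟩
    have hjm : m ≤ j := by omega
    have hμk : μ k ≤ s := mu_ncard_le hmono hex
    have hsμj : s < μ j := lt_mu_of_lt_ncard hmono hex (by omega)
    have hsp : 0 ≤ s ^ p := Real.rpow_nonneg hs0.le p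
    have hub : s ^ p * (k : ℝ) ≤ l + ε / 3 := by
      have h1 : s ^ p ≤ μ j ^ p := Real.rpow_le_rpow hs0.le hsμj.le hp.le
      have h2 : ((j : ℝ) + 1) * μ j ^ p ≤ l + ε / 3 := by
        have := hn₀ j (le_trans hmn₀ hjm)
        rw [Real.dist_eq] at this
        linarith [(abs_sub_le_iff.mp this.le).1]
      have hkc : (k : ℝ) = (j : ℝ) + 1 := by exact_mod_cast hj
      rw [hkc]
      calc s ^ p * ((j : ℝ) + 1) ≤ μ j ^ p * ((j : ℝ) + 1) := by
            refine mul_le_mul_of_nonneg_right h1 (by positivity)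
        _ = ((j : ℝ) + 1) * μ j ^ p := mul_comm _ _
        _ ≤ l + ε / 3 := h2
    have hlb : l - 2 * (ε / 3) ≤ s ^ p * (k : ℝ) := by
      have h1 : μ k ^ p ≤ s ^ p := Real.rpow_le_rpow (hnn k) hμk hp.le
      have h2 : l - ε / 3 ≤ ((k : ℝ) + 1) * μ k ^ p := by
        have := hn₀ k (by omega)
        rw [Real.dist_eq] at this
        linarith [(abs_sub_le_iff.mp this.le).2]
      have h3 : ((k : ℝ) + 1) * μ k ^ p ≤ l + ε / 3 := by
        have := hn₀ k (by omega)
        rw [Real.dist_eq] at this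
        linarith [(abs_sub_le_iff.mp this.le).1]
      have hμkp : μ k ^ p ≤ ε / 3 := by
        have hkm2 : (m : ℝ) + 2 ≤ (k : ℝ) + 1 := by
          have : m + 1 ≤ k := hmk
          exact_mod_cast by push_cast; linarith [(Nat.cast_le (α := ℝ)).mpr this]
        have hμknn : 0 ≤ μ k ^ p := Real.rpow_nonneg (hnn k) p
        nlinarith
      have hkr : 0 ≤ (k : ℝ) := Nat.cast_nonneg _
      nlinarith
    rw [Real.dist_eq, abs_sub_lt_iff]
    constructor <;> linarith

end counting

/-- Equivalence of counting-function and eigenvalue asymptotics for a positive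
compact operator `A`: for `p > 0`, if one of the limits
`lim_{s→0⁺} s^p N(s)` or `lim_{n→∞} (n+1) μ(n,A)^p` exists, then both exist
and they are equal. -/
theorem counting_eigenvalue_asymptotics_equiv {H : Type*} [NormedAddCommGroup H]
    [InnerProductSpace ℂ H] [CompleteSpace H]
    (p : ℝ) (hp : 0 < p) (A : H →L[ℂ] H)
    (hAc : IsCompactOperator A) (hApos : A.IsPositive) :
    (∀ l : ℝ,
        Tendsto (fun s : ℝ => s ^ p * (countingFn A s : ℝ))
            (nhdsWithin 0 (Set.Ioi 0)) (nhds l) →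
          Tendsto (fun n : ℕ => ((n : ℝ) + 1) * (singVal A n) ^ p)
            atTop (nhds l)) ∧
      (∀ l : ℝ,
        Tendsto (fun n : ℕ => ((n : ℝ) + 1) * (singVal A n) ^ p)
            atTop (nhds l) →
          Tendsto (fun s : ℝ => s ^ p * (countingFn A s : ℝ))
            (nhdsWithin 0 (Set.Ioi 0)) (nhds l)) := by
  have hmono := singVal_antitone A
  have hnn := singVal_nonneg A
  have h0 := singVal_tendsto_zero A hAc
  exact ⟨fun l hl => forward_abstract hp hmono hnn h0 l hl,
    fun l hl => backward_abstract hp hmono hnn h0 l hl⟩
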